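/- Let N, N* ≥ 0 be integers, let 0 = p₀ < p₁ < ⋯ < p_{N*} be integers, and let g, h₁, h₂ > 0 and 0 < ρ₁ < ρ₂ be real numbers. Define for ξ ∈ ℝⁿ \ {0} the quantity c_K(ξ)² = (ρ₂−ρ₁) g |ξ|^{−2} det 𝒜₁(h₁ξ) det 𝒜₂(h₂ξ) / ( ρ₁ h₁ det 𝒜̃₁(h₁ξ) det 𝒜₂(h₂ξ) + ρ₂ h₂ det 𝒜̃₂(h₂ξ) det 𝒜₁(h₁ξ) ). Then, as |ξ| → ∞, c_K(ξ)² converges to the limit L = (ρ₂−ρ₁) g h₁ h₂ det A_{1,0} det A_{2,0} / ( ρ₁ h₂ det Ã_{1,0} det A_{2,0} + ρ₂ h₁ det Ã_{2,0} det A_{1,0} ), and L > 0. -/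

import Mathlib

/-- For a square matrix `A` of size `m`, `tilde A` is the `(m+1) × (m+1)` matrix with block
form `[[0, 𝟙ᵀ], [−𝟙, A]]`, where `𝟙 = (1,…,1)ᵀ`. -/
noncomputable def tilde {m : ℕ} (A : Matrix (Fin m) (Fin m) ℝ) :
    Matrix (Fin 1 ⊕ Fin m) (Fin 1 ⊕ Fin m) ℝ :=
  Matrix.fromBlocks 0 (Matrix.of fun _ _ => (1 : ℝ)) (Matrix.of fun _ _ => (-1 : ℝ)) A

/-- The matrix `A_{1,0} = (1/(2(i+j)+1))`. -/
noncomputable def matA10 (N : ℕ) : Matrix (Fin (N + 1)) (Fin (N + 1)) ℝ :=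
  Matrix.of fun i j => (1 : ℝ) / (2 * ((i : ℕ) + (j : ℕ)) + 1)

/-- The matrix `A_{1,1} = (4ij/(2(i+j)−1))`. -/
noncomputable def matA11 (N : ℕ) : Matrix (Fin (N + 1)) (Fin (N + 1)) ℝ :=
  Matrix.of fun i j => (4 * (i : ℕ) * (j : ℕ) : ℝ) / ((2 * ((i : ℕ) + (j : ℕ)) : ℝ) - 1)

/-- The matrix `A_{2,0} = (1/(pᵢ+pⱼ+1))`. -/
noncomputable def matA20 (M : ℕ) (p : Fin (M + 1) → ℕ) :
    Matrix (Fin (M + 1)) (Fin (M + 1)) ℝ :=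
  Matrix.of fun i j => (1 : ℝ) / ((p i : ℝ) + (p j : ℝ) + 1)

/-- The matrix `A_{2,1} = (pᵢpⱼ/(pᵢ+pⱼ−1))` (with the convention `0/0 = 0`). -/
noncomputable def matA21 (M : ℕ) (p : Fin (M + 1) → ℕ) :
    Matrix (Fin (M + 1)) (Fin (M + 1)) ℝ :=
  Matrix.of fun i j => ((p i : ℝ) * (p j : ℝ)) / ((p i : ℝ) + (p j : ℝ) - 1)

open MeasureTheory Polynomial Matrix ENNReal in
theorem matA20_posDef (M : ℕ) (p : Fin (M + 1) → ℕ) (hp : Function.Injective p) :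
    (matA20 M p).PosDef := by
  refine Matrix.posDef_iff_dotProduct_mulVec.mpr ⟨?_, ?_⟩
  · ext i j
    simp only [matA20, Matrix.conjTranspose_apply, Matrix.of_apply, star_trivial]
    ring
  · intro x hx
    have hLHS : star x ⬝ᵥ (matA20 M p) *ᵥ x
        = ∑ i, ∑ j, (x i * x j) / ((p i : ℝ) + (p j : ℝ) + 1) := by
      simp only [dotProduct, Matrix.mulVec, matA20, Matrix.of_apply, Pi.star_apply,
        star_trivial, Finset.mul_sum]
      exact Finset.sum_congr rfl fun i _ => Finset.sum_congr rfl fun j _ => by ring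
    have hint : ∀ k : ℕ, (∫ t in (0:ℝ)..1, t ^ k) = ((k : ℝ) + 1)⁻¹ := by
      intro k
      rw [integral_pow]
      simp
    have hRHS : (∫ t in (0:ℝ)..1, (∑ i, x i * t ^ p i) ^ 2)
        = ∑ i, ∑ j, (x i * x j) / ((p i : ℝ) + (p j : ℝ) + 1) := by
      have h1 : ∀ t : ℝ, (∑ i, x i * t ^ p i) ^ 2
          = ∑ i, ∑ j, (x i * x j) * t ^ (p i + p j) := by
        intro t
        rw [sq, Finset.sum_mul_sum]
        exact Finset.sum_congr rfl fun i _ => Finset.sum_congr rfl fun j _ => by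
          rw [pow_add]; ring
      simp only [h1]
      rw [intervalIntegral.integral_finset_sum]
      · refine Finset.sum_congr rfl fun i _ => ?_
        rw [intervalIntegral.integral_finset_sum]
        · refine Finset.sum_congr rfl fun j _ => ?_
          rw [intervalIntegral.integral_const_mul, hint]
          push_cast
          rw [div_eq_mul_inv]
        · intro j _
          exact ((continuous_const.mul (continuous_pow _)).intervalIntegrable 0 1)
      · intro i _
        exact ((continuous_finset_sum _ fun j _ =>
          (continuous_const.mul (continuous_pow _))).intervalIntegrable 0 1)
    rw [hLHS, ← hRHS]
    set Q : Polynomial ℝ := ∑ i, Polynomial.C (x i) * Polynomial.X ^ p i with hQ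
    have hQeval : ∀ t : ℝ, Q.eval t = ∑ i, x i * t ^ p i := by
      intro t
      simp [hQ, eval_finset_sum]
    have hQne : Q ≠ 0 := by
      obtain ⟨i, hi⟩ := Function.ne_iff.1 hx
      intro h0
      have hc : Q.coeff (p i) = x i := by
        simp only [hQ, finset_sum_coeff, coeff_C_mul, coeff_X_pow]
        rw [Finset.sum_eq_single i]
        · simp
        · intro j _ hj
          rw [if_neg fun h => hj (hp h.symm), mul_zero]
        · intro h
          exact absurd (Finset.mem_univ i) h
      rw [h0] at hc
      simp at hc
      exact hi hc.symm
    rw [intervalIntegral.integral_of_le zero_le_one]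
    refine (setIntegral_pos_iff_support_of_nonneg_ae ?_ ?_).2 ?_
    · filter_upwards with t using sq_nonneg _
    · exact ((continuous_finset_sum _ fun i _ =>
        (continuous_const.mul (continuous_pow _))).pow 2).integrableOn_Ioc
    · have hsub : Set.Ioc (0:ℝ) 1 \ {t | Q.IsRoot t}
          ⊆ Function.support (fun t => (∑ i, x i * t ^ p i) ^ 2) ∩ Set.Ioc 0 1 := by
        rintro t ⟨ht, hroot⟩
        refine ⟨?_, ht⟩
        simp only [Function.mem_support]
        intro h
        exact hroot (by
          simp only [Polynomial.IsRoot, hQeval]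
          exact pow_eq_zero_iff two_ne_zero |>.1 h)
      calc (0:ℝ≥0∞) < volume (Set.Ioc (0:ℝ) 1 \ {t | Q.IsRoot t}) := by
            rw [measure_diff_null ((Polynomial.finite_setOf_isRoot hQne).measure_zero _)]
            simp [Real.volume_Ioc]
        _ ≤ _ := measure_mono hsub

open Matrix in
theorem det_tilde_pos {m : ℕ} {A : Matrix (Fin (m + 1)) (Fin (m + 1)) ℝ} (hA : A.PosDef) :
    0 < (tilde A).det := by
  have hdet : 0 < A.det := hA.det_pos
  have : Invertible A := A.invertibleOfIsUnitDet hdet.ne'.isUnit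
  have hinv : A⁻¹.PosDef := hA.inv
  rw [tilde, Matrix.det_fromBlocks₂₂]
  have h1 : ((0 : Matrix (Fin 1) (Fin 1) ℝ)
        - (Matrix.of fun (_ : Fin 1) (_ : Fin (m+1)) => (1:ℝ)) * ⅟A
          * (Matrix.of fun (_ : Fin (m+1)) (_ : Fin 1) => (-1:ℝ))).det
      = ∑ k, ∑ j, A⁻¹ k j := by
    rw [Matrix.det_fin_one]
    simp [Matrix.mul_apply, invOf_eq_nonsing_inv]
    exact Finset.sum_comm
  rw [h1]
  have hx : (fun _ : Fin (m+1) => (1:ℝ)) ≠ 0 := by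
    intro h
    have := congrFun h 0
    simp at this
  have hq := hinv.dotProduct_mulVec_pos hx
  have h2 : star (fun _ : Fin (m+1) => (1:ℝ)) ⬝ᵥ A⁻¹ *ᵥ (fun _ => (1:ℝ))
      = ∑ k, ∑ j, A⁻¹ k j := by
    simp [dotProduct, Matrix.mulVec]
  rw [h2] at hq
  positivity

open Matrix in
theorem det_tilde_smul {m : ℕ} {u : ℝ} (hu : u ≠ 0) (A : Matrix (Fin (m + 1)) (Fin (m + 1)) ℝ) :
    (tilde (u • A)).det = u ^ m * (tilde A).det := by
  have key : tilde (u • A)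
      = Matrix.diagonal (Sum.elim (fun _ : Fin 1 => (1:ℝ)) fun _ : Fin (m+1) => u)
        * tilde A
        * Matrix.diagonal (Sum.elim (fun _ : Fin 1 => u⁻¹) fun _ : Fin (m+1) => (1:ℝ)) := by
    ext i j
    rw [Matrix.mul_diagonal, Matrix.diagonal_mul]
    rcases i with i | i <;> rcases j with j | j <;>
      simp [tilde, Matrix.fromBlocks] <;> field_simp
  rw [key, Matrix.det_mul, Matrix.det_mul, Matrix.det_diagonal, Matrix.det_diagonal]
  rw [Fintype.prod_sum_type, Fintype.prod_sum_type]
  simp only [Sum.elim_inl, Sum.elim_inr, Finset.prod_const, Finset.card_univ, Fintype.card_fin,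
    one_pow, one_mul, mul_one]
  rw [pow_one]
  field_simp
  ring

open Filter Matrix

/-- In the deep water limit `|ξ| → ∞`, the squared phase speed of the linearized Kakinuma model
converges to a positive limit. -/
theorem stmt_8 (n N Nstar : ℕ) (hn : 1 ≤ n) (p : Fin (Nstar + 1) → ℕ)
    (hp0 : p 0 = 0) (hp : StrictMono p)
    (g h₁ h₂ ρ₁ ρ₂ : ℝ) (hg : 0 < g) (hh₁ : 0 < h₁) (hh₂ : 0 < h₂)
    (hρ₁ : 0 < ρ₁) (hρ : ρ₁ < ρ₂) :
    Filter.Tendsto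
      (fun ξ : EuclideanSpace ℝ (Fin n) =>
        (ρ₂ - ρ₁) * g * (‖ξ‖ ^ 2)⁻¹
          * (‖(h₁ • ξ : EuclideanSpace ℝ (Fin n))‖ ^ 2 • matA10 N + matA11 N).det
          * (‖(h₂ • ξ : EuclideanSpace ℝ (Fin n))‖ ^ 2 • matA20 Nstar p + matA21 Nstar p).det
          / (ρ₁ * h₁
              * (tilde (‖(h₁ • ξ : EuclideanSpace ℝ (Fin n))‖ ^ 2 • matA10 N + matA11 N)).det
              * (‖(h₂ • ξ : EuclideanSpace ℝ (Fin n))‖ ^ 2 • matA20 Nstar p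
                  + matA21 Nstar p).det
            + ρ₂ * h₂
              * (tilde (‖(h₂ • ξ : EuclideanSpace ℝ (Fin n))‖ ^ 2 • matA20 Nstar p
                  + matA21 Nstar p)).det
              * (‖(h₁ • ξ : EuclideanSpace ℝ (Fin n))‖ ^ 2 • matA10 N + matA11 N).det))
      (Filter.comap (fun ξ : EuclideanSpace ℝ (Fin n) => ‖ξ‖) Filter.atTop)
      (nhds ((ρ₂ - ρ₁) * g * h₁ * h₂ * (matA10 N).det * (matA20 Nstar p).det
        / (ρ₁ * h₂ * (tilde (matA10 N)).det * (matA20 Nstar p).det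
          + ρ₂ * h₁ * (tilde (matA20 Nstar p)).det * (matA10 N).det)))
    ∧ 0 < (ρ₂ - ρ₁) * g * h₁ * h₂ * (matA10 N).det * (matA20 Nstar p).det
        / (ρ₁ * h₂ * (tilde (matA10 N)).det * (matA20 Nstar p).det
          + ρ₂ * h₁ * (tilde (matA20 Nstar p)).det * (matA10 N).det) := by
  have hρ₂ : 0 < ρ₂ := hρ₁.trans hρ
  have hρ' : 0 < ρ₂ - ρ₁ := sub_pos.2 hρ
  have hA1 : (matA10 N).PosDef := by
    have h : matA10 N = matA20 N (fun i => 2 * (i : ℕ)) := by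
      ext i j
      simp only [matA10, matA20, Matrix.of_apply]
      push_cast
      ring_nf
    rw [h]
    exact matA20_posDef N _ fun i j hij => Fin.ext (by omega)
  have hA2 : (matA20 Nstar p).PosDef := matA20_posDef _ _ hp.injective
  have hd1 : 0 < (matA10 N).det := hA1.det_pos
  have hd2 : 0 < (matA20 Nstar p).det := hA2.det_pos
  have ht1 : 0 < (tilde (matA10 N)).det := det_tilde_pos hA1
  have ht2 : 0 < (tilde (matA20 Nstar p)).det := det_tilde_pos hA2
  have hden : 0 < ρ₁ * h₂ * (tilde (matA10 N)).det * (matA20 Nstar p).det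
      + ρ₂ * h₁ * (tilde (matA20 Nstar p)).det * (matA10 N).det :=
    add_pos (mul_pos (mul_pos (mul_pos hρ₁ hh₂) ht1) hd2)
      (mul_pos (mul_pos (mul_pos hρ₂ hh₁) ht2) hd1)
  have hLpos : 0 < (ρ₂ - ρ₁) * g * h₁ * h₂ * (matA10 N).det * (matA20 Nstar p).det
      / (ρ₁ * h₂ * (tilde (matA10 N)).det * (matA20 Nstar p).det
        + ρ₂ * h₁ * (tilde (matA20 Nstar p)).det * (matA10 N).det) :=
    div_pos (mul_pos (mul_pos (mul_pos (mul_pos (mul_pos hρ' hg) hh₁) hh₂) hd1) hd2) hden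
  -- the inverse square factor tends to 0
  have hc : ∀ h : ℝ, 0 < h → Tendsto (fun s : ℝ => ((h * s) ^ 2)⁻¹) atTop (nhds 0) := by
    intro h hh
    apply Filter.Tendsto.inv_tendsto_atTop
    exact (tendsto_pow_atTop two_ne_zero).comp (Filter.Tendsto.const_mul_atTop hh tendsto_id)
  have hdet_lim : ∀ {k : ℕ} (A B : Matrix (Fin (k+1)) (Fin (k+1)) ℝ) (h : ℝ), 0 < h →
      Tendsto (fun s : ℝ => (A + ((h * s) ^ 2)⁻¹ • B).det) atTop (nhds A.det) := by
    intro k A B h hh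
    have hcont : Continuous fun c : ℝ => (A + c • B).det :=
      Continuous.matrix_det (continuous_const.add (continuous_id.smul continuous_const))
    have := (hcont.tendsto 0).comp (hc h hh)
    simpa [Function.comp_def] using this
  have htilde_lim : ∀ {k : ℕ} (A B : Matrix (Fin (k+1)) (Fin (k+1)) ℝ) (h : ℝ), 0 < h →
      Tendsto (fun s : ℝ => (tilde (A + ((h * s) ^ 2)⁻¹ • B)).det) atTop
        (nhds (tilde A).det) := by
    intro k A B h hh
    have hcont : Continuous fun c : ℝ => (tilde (A + c • B)).det := by
      apply Continuous.matrix_det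
      apply continuous_matrix
      rintro (i | i) (j | j) <;>
        simp only [tilde, Matrix.fromBlocks_apply₁₁, Matrix.fromBlocks_apply₁₂,
          Matrix.fromBlocks_apply₂₁, Matrix.fromBlocks_apply₂₂, Matrix.zero_apply,
          Matrix.of_apply, Matrix.add_apply, Matrix.smul_apply, smul_eq_mul]
      · exact continuous_const
      · exact continuous_const
      · exact continuous_const
      · exact continuous_const.add (continuous_id.mul continuous_const)
    have := (hcont.tendsto 0).comp (hc h hh)
    simpa [Function.comp_def] using this
  have hG : Tendsto (fun s : ℝ =>
      ((ρ₂ - ρ₁) * g * h₁ * h₂ * (matA10 N + ((h₁ * s) ^ 2)⁻¹ • matA11 N).det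
          * (matA20 Nstar p + ((h₂ * s) ^ 2)⁻¹ • matA21 Nstar p).det)
        / (ρ₁ * h₂ * (tilde (matA10 N + ((h₁ * s) ^ 2)⁻¹ • matA11 N)).det
            * (matA20 Nstar p + ((h₂ * s) ^ 2)⁻¹ • matA21 Nstar p).det
          + ρ₂ * h₁ * (tilde (matA20 Nstar p + ((h₂ * s) ^ 2)⁻¹ • matA21 Nstar p)).det
            * (matA10 N + ((h₁ * s) ^ 2)⁻¹ • matA11 N).det))
      atTop (nhds ((ρ₂ - ρ₁) * g * h₁ * h₂ * (matA10 N).det * (matA20 Nstar p).det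
        / (ρ₁ * h₂ * (tilde (matA10 N)).det * (matA20 Nstar p).det
          + ρ₂ * h₁ * (tilde (matA20 Nstar p)).det * (matA10 N).det))) := by
    refine Tendsto.div ?_ ?_ hden.ne'
    · exact (tendsto_const_nhds.mul (hdet_lim (matA10 N) (matA11 N) h₁ hh₁)).mul
        (hdet_lim (matA20 Nstar p) (matA21 Nstar p) h₂ hh₂)
    · exact ((tendsto_const_nhds.mul (htilde_lim (matA10 N) (matA11 N) h₁ hh₁)).mul
        (hdet_lim (matA20 Nstar p) (matA21 Nstar p) h₂ hh₂)).add
        ((tendsto_const_nhds.mul (htilde_lim (matA20 Nstar p) (matA21 Nstar p) h₂ hh₂)).mul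
        (hdet_lim (matA10 N) (matA11 N) h₁ hh₁))
  have hF : Tendsto (fun s : ℝ =>
      (ρ₂ - ρ₁) * g * (s ^ 2)⁻¹
        * ((h₁ * s) ^ 2 • matA10 N + matA11 N).det
        * ((h₂ * s) ^ 2 • matA20 Nstar p + matA21 Nstar p).det
        / (ρ₁ * h₁ * (tilde ((h₁ * s) ^ 2 • matA10 N + matA11 N)).det
            * ((h₂ * s) ^ 2 • matA20 Nstar p + matA21 Nstar p).det
          + ρ₂ * h₂ * (tilde ((h₂ * s) ^ 2 • matA20 Nstar p + matA21 Nstar p)).det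
            * ((h₁ * s) ^ 2 • matA10 N + matA11 N).det))
      atTop (nhds ((ρ₂ - ρ₁) * g * h₁ * h₂ * (matA10 N).det * (matA20 Nstar p).det
        / (ρ₁ * h₂ * (tilde (matA10 N)).det * (matA20 Nstar p).det
          + ρ₂ * h₁ * (tilde (matA20 Nstar p)).det * (matA10 N).det))) := by
    refine Filter.Tendsto.congr' ?_ hG
    filter_upwards [eventually_ge_atTop (1:ℝ)] with s hs
    have hs0 : 0 < s := lt_of_lt_of_le one_pos hs
    have hu₁ : ((h₁ * s) ^ 2) ≠ 0 := by positivity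
    have hu₂ : ((h₂ * s) ^ 2) ≠ 0 := by positivity
    have split : ∀ {k : ℕ} (A B : Matrix (Fin (k+1)) (Fin (k+1)) ℝ) (u : ℝ), u ≠ 0 →
        u • A + B = u • (A + u⁻¹ • B) := by
      intro k A B u hu
      rw [smul_add, smul_smul, mul_inv_cancel₀ hu, one_smul]
    have E1 : ((h₁ * s) ^ 2 • matA10 N + matA11 N).det
        = ((h₁ * s) ^ 2) ^ (N + 1) * (matA10 N + ((h₁ * s) ^ 2)⁻¹ • matA11 N).det := by
      rw [split _ _ _ hu₁, Matrix.det_smul, Fintype.card_fin]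
    have E2 : ((h₂ * s) ^ 2 • matA20 Nstar p + matA21 Nstar p).det
        = ((h₂ * s) ^ 2) ^ (Nstar + 1)
          * (matA20 Nstar p + ((h₂ * s) ^ 2)⁻¹ • matA21 Nstar p).det := by
      rw [split _ _ _ hu₂, Matrix.det_smul, Fintype.card_fin]
    have E3 : (tilde ((h₁ * s) ^ 2 • matA10 N + matA11 N)).det
        = ((h₁ * s) ^ 2) ^ N * (tilde (matA10 N + ((h₁ * s) ^ 2)⁻¹ • matA11 N)).det := by
      rw [split _ _ _ hu₁, det_tilde_smul hu₁]
    have E4 : (tilde ((h₂ * s) ^ 2 • matA20 Nstar p + matA21 Nstar p)).det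
        = ((h₂ * s) ^ 2) ^ Nstar
          * (tilde (matA20 Nstar p + ((h₂ * s) ^ 2)⁻¹ • matA21 Nstar p)).det := by
      rw [split _ _ _ hu₂, det_tilde_smul hu₂]
    rw [E1, E2, E3, E4]
    set d1 := (matA10 N + ((h₁ * s) ^ 2)⁻¹ • matA11 N).det
    set d2 := (matA20 Nstar p + ((h₂ * s) ^ 2)⁻¹ • matA21 Nstar p).det
    set t1 := (tilde (matA10 N + ((h₁ * s) ^ 2)⁻¹ • matA11 N)).det
    set t2 := (tilde (matA20 Nstar p + ((h₂ * s) ^ 2)⁻¹ • matA21 Nstar p)).det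
    have hC : (s ^ 2 * h₁ * h₂ * ((h₁ * s) ^ 2) ^ N * ((h₂ * s) ^ 2) ^ Nstar) ≠ 0 := by
      positivity
    rw [show (ρ₂ - ρ₁) * g * (s ^ 2)⁻¹ * (((h₁ * s) ^ 2) ^ (N + 1) * d1)
          * (((h₂ * s) ^ 2) ^ (Nstar + 1) * d2)
        = (s ^ 2 * h₁ * h₂ * ((h₁ * s) ^ 2) ^ N * ((h₂ * s) ^ 2) ^ Nstar)
          * ((ρ₂ - ρ₁) * g * h₁ * h₂ * d1 * d2) from by
      field_simp
      ring]
    rw [show ρ₁ * h₁ * (((h₁ * s) ^ 2) ^ N * t1) * (((h₂ * s) ^ 2) ^ (Nstar + 1) * d2)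
          + ρ₂ * h₂ * (((h₂ * s) ^ 2) ^ Nstar * t2) * (((h₁ * s) ^ 2) ^ (N + 1) * d1)
        = (s ^ 2 * h₁ * h₂ * ((h₁ * s) ^ 2) ^ N * ((h₂ * s) ^ 2) ^ Nstar)
          * (ρ₁ * h₂ * t1 * d2 + ρ₂ * h₁ * t2 * d1) from by ring]
    rw [mul_div_mul_left _ _ hC]
  have hnorm : ∀ (h : ℝ), 0 < h → ∀ ξ : EuclideanSpace ℝ (Fin n),
      ‖(h • ξ : EuclideanSpace ℝ (Fin n))‖ ^ 2 = (h * ‖ξ‖) ^ 2 := by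
    intro h hh ξ
    rw [norm_smul, Real.norm_eq_abs, abs_of_pos hh]
  refine ⟨Filter.Tendsto.congr (fun ξ => ?_) (hF.comp tendsto_comap), hLpos⟩
  simp only [Function.comp_apply, hnorm h₁ hh₁ ξ, hnorm h₂ hh₂ ξ]
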